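/- For $d\in\overline{D}$, the projection of $Q_{\mathrm{MTZ}}(d)=\{(x,u)\in P_{\mathrm{AP}}\times\mathbb{R}^{N_1} : u_i-u_j+d_{ij}\le 1-x_{ij}\ \forall ij\in A_1\}$ onto the $x$-variables equals $P_{\mathrm{MTZ}}(d)=\{x\in P_{\mathrm{AP}} : \sum_{ij\in C}x_{ij}\le|C|-\sum_{ij\in C}d_{ij}\ \forall C\in\mathcal{C}_1\}$. -/

import Mathlib

/-- Weight of a directed cycle given by nodes `v 0, …, v (k-1)` with arcs
`(v i, v ((i+1) % k))`. -/
def cycleSum {α : Type} (c : α → α → ℝ) (k : ℕ) (v : ℕ → α) : ℝ :=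
  ∑ i ∈ Finset.range k, c (v i) (v ((i + 1) % k))

/-- A directed cycle: at least two distinct nodes `v 0, …, v (k-1)`. -/
def IsCycle {α : Type} (k : ℕ) (v : ℕ → α) : Prop :=
  2 ≤ k ∧ ∀ i < k, ∀ j < k, v i = v j → i = j

/-- A directed cycle avoiding node `0` (the paper's node 1), i.e. a member of `𝒞₁`. -/
def IsCycle1 {n : ℕ} (k : ℕ) (v : ℕ → Fin (n + 1)) : Prop :=
  IsCycle k v ∧ ∀ i < k, v i ≠ 0

/-- The (restricted) assignment polytope `P_AP`. -/
def memPAP {n : ℕ} (x : Fin (n + 1) → Fin (n + 1) → ℝ) : Prop :=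
  (∀ i j : Fin (n + 1), i ≠ j → 0 ≤ x i j ∧ x i j ≤ 1) ∧
  (∀ i : Fin (n + 1), ∑ j ∈ Finset.univ.erase i, x i j = 1) ∧
  (∀ i : Fin (n + 1), ∑ j ∈ Finset.univ.erase i, x j i = 1)

/-- Membership in `D̄ = {d ≥ 0 : ∑_{ij ∈ C} d_{ij} ≤ 1 for all C ∈ 𝒞₁}`. -/
def memDbar {n : ℕ} (d : Fin (n + 1) → Fin (n + 1) → ℝ) : Prop :=
  (∀ i j : Fin (n + 1), i ≠ 0 → j ≠ 0 → i ≠ j → 0 ≤ d i j) ∧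
  ∀ (k : ℕ) (v : ℕ → Fin (n + 1)), IsCycle1 k v → cycleSum d k v ≤ 1

/-- For `d ∈ D̄`, the projection of `Q_MTZ(d)` onto the `x`-variables equals
`P_MTZ(d) = {x ∈ P_AP : ∑_{ij∈C} x_{ij} ≤ |C| - ∑_{ij∈C} d_{ij} ∀ C ∈ 𝒞₁}`. -/
def pw {α : Type} (w : α → α → ℝ) : List α → ℝ
  | [] => 0
  | [_] => 0
  | a :: b :: t => w a b + pw w (b :: t)

lemma pw_append {α : Type} (w : α → α → ℝ) (Q : List α) (a : α) (R : List α) :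
    pw w (Q ++ a :: R) = pw w (Q ++ [a]) + pw w (a :: R) := by
  induction Q with
  | nil => simp [pw]
  | cons q Q' ih =>
    cases Q' with
    | nil => cases R <;> simp [pw]
    | cons q' T => simp only [List.cons_append, pw] at *; rw [ih]; ring

lemma pw_eq_sum {α : Type} (w : α → α → ℝ) (z : α) (l : List α) :
    pw w l = ∑ i ∈ Finset.range (l.length - 1), w (l.getD i z) (l.getD (i + 1) z) := by
  induction l with
  | nil => simp [pw]
  | cons a t ih =>
    cases t with
    | nil => simp [pw]
    | cons b s =>
      have hlen : (a :: b :: s).length - 1 = (b :: s).length - 1 + 1 := by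
        simp
      rw [pw, ih, hlen, Finset.sum_range_succ']
      simp only [List.getD_cons_succ, List.getD_cons_zero]
      ring_nf

lemma cycle_pw {α : Type} (f : α → α → ℝ) (z : α) (c : List α) (hc : 2 ≤ c.length) :
    cycleSum f c.length (fun i => c.getD i z)
      = pw f c + f (c.getD (c.length - 1) z) (c.getD 0 z) := by
  obtain ⟨m, hm⟩ : ∃ m, c.length = m + 1 := ⟨c.length - 1, by omega⟩
  rw [cycleSum, pw_eq_sum f z, hm, Finset.sum_range_succ]
  congr 1
  · apply Finset.sum_congr (by simp [hm])
    intro i hi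
    simp only [Finset.mem_range] at hi
    rw [Nat.mod_eq_of_lt (by omega)]
  · rw [Nat.mod_self]
    simp

lemma isCycle1_of_list {n : ℕ} (z : Fin (n + 1)) (c : List (Fin (n + 1)))
    (hnd : c.Nodup) (hlen : 2 ≤ c.length) (h0 : ∀ a ∈ c, a ≠ 0) :
    IsCycle1 c.length (fun i => c.getD i z) := by
  refine ⟨⟨hlen, ?_⟩, ?_⟩
  · intro i hi j hj hij
    simp only [] at hij
    rw [List.getD_eq_getElem c z hi, List.getD_eq_getElem c z hj] at hij
    exact (hnd.getElem_inj_iff).mp hij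
  · intro i hi
    simp only []
    rw [List.getD_eq_getElem c z hi]
    exact h0 _ (List.getElem_mem _)

lemma sum_shift (g : ℕ → ℝ) (k : ℕ) (hk : 1 ≤ k) :
    ∑ i ∈ Finset.range k, g ((i + 1) % k) = ∑ i ∈ Finset.range k, g i := by
  obtain ⟨m, rfl⟩ : ∃ m, k = m + 1 := ⟨k - 1, by omega⟩
  rw [Finset.sum_range_succ, Finset.sum_range_succ' g m, Nat.mod_self]
  congr 1
  apply Finset.sum_congr rfl
  intro i hi
  simp only [Finset.mem_range] at hi
  rw [Nat.mod_eq_of_lt (by omega)]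

def validPath {n : ℕ} (i : Fin (n + 1)) (l : List (Fin (n + 1))) : Prop :=
  l.Nodup ∧ l.head? = some i ∧ ∀ a ∈ l, a ≠ 0

lemma validPath_finite {n : ℕ} (i : Fin (n + 1)) : {l | validPath i l}.Finite := by
  apply Set.Finite.subset (List.finite_length_le (Fin (n + 1)) (n + 1))
  intro l hl
  exact le_trans hl.1.length_le_card (by simp)

noncomputable def pot {n : ℕ} (w : Fin (n + 1) → Fin (n + 1) → ℝ) (i : Fin (n + 1)) : ℝ :=
  sInf (pw w '' {l | validPath i l})

lemma pot_le {n : ℕ} (w : Fin (n + 1) → Fin (n + 1) → ℝ) {i : Fin (n + 1)}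
    {l : List (Fin (n + 1))} (hl : validPath i l) : pot w i ≤ pw w l :=
  csInf_le ((validPath_finite i).image _).bddBelow ⟨l, hl, rfl⟩

lemma pot_attained {n : ℕ} (w : Fin (n + 1) → Fin (n + 1) → ℝ) {i : Fin (n + 1)}
    (hi : i ≠ 0) : ∃ l, validPath i l ∧ pw w l = pot w i := by
  have hne : (pw w '' {l | validPath i l}).Nonempty :=
    ⟨pw w [i], [i], ⟨List.nodup_singleton i, rfl, by simpa using hi⟩, rfl⟩
  obtain ⟨l, hl, he⟩ := hne.csInf_mem (((validPath_finite i).image _))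
  exact ⟨l, hl, he⟩

lemma pot_step {n : ℕ} (w : Fin (n + 1) → Fin (n + 1) → ℝ)
    (hcyc : ∀ c : List (Fin (n + 1)), c.Nodup → 2 ≤ c.length → (∀ a ∈ c, a ≠ 0) →
      0 ≤ pw w c + w (c.getD (c.length - 1) 0) (c.getD 0 0))
    (i j : Fin (n + 1)) (hi : i ≠ 0) (hj : j ≠ 0) (hij : i ≠ j) :
    pot w i ≤ pot w j + w i j := by
  obtain ⟨P, ⟨hnd, hhd, h0⟩, hPw⟩ := pot_attained w hj
  obtain ⟨T, rfl⟩ : ∃ T, P = j :: T := by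
    cases P with
    | nil => simp at hhd
    | cons a T => exact ⟨T, by simpa using congrArg (List.cons · T) (by simpa using hhd)⟩
  by_cases hmem : i ∈ j :: T
  · obtain ⟨Q, R, hQR⟩ := List.append_of_mem hmem
    cases Q with
    | nil =>
      exfalso
      simp only [List.nil_append] at hQR
      exact hij (by injection hQR with h _; exact h.symm)
    | cons q Q' =>
      obtain rfl : j = q := by simpa using congrArg List.head? hQR
      rw [hQR] at hnd h0 hPw
      -- the cycle j :: (Q' ++ [i])
      have hsub : (j :: (Q' ++ [i])).Sublist (j :: (Q' ++ i :: R)) :=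
        ((List.nil_sublist R).cons₂ i).append_left Q' |>.cons₂ j
      have hnd' : (j :: (Q' ++ i :: R)).Nodup := by simpa using hnd
      have h0' : ∀ a ∈ j :: (Q' ++ i :: R), a ≠ 0 := by
        intro a ha; exact h0 a (by simpa using ha)
      have hcnd : (j :: (Q' ++ [i])).Nodup := hnd'.sublist hsub
      have hc0 : ∀ a ∈ j :: (Q' ++ [i]), a ≠ 0 := fun a ha => h0' a (hsub.mem ha)
      have hclen : 2 ≤ (j :: (Q' ++ [i])).length := by simp
      have hcy := hcyc _ hcnd hclen hc0
      have e : (j :: (Q' ++ [i])).length - 1 = Q'.length + 1 := by simp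
      have hlast : (j :: (Q' ++ [i])).getD (Q'.length + 1) 0 = i := by
        rw [List.getD_cons_succ, List.getD_append_right Q' [i] 0 Q'.length (le_refl _)]
        simp
      rw [e, hlast, List.getD_cons_zero] at hcy
      -- the path i :: R
      have hiR : validPath i (i :: R) := by
        refine ⟨hnd'.of_cons.of_append_right, rfl, ?_⟩
        intro a ha
        exact h0' a (List.mem_cons_of_mem _ (List.mem_append_right _ ha))
      have h1 := pot_le w hiR
      rw [show (j :: Q') ++ i :: R = j :: (Q' ++ i :: R) from rfl] at hPw
      rw [show j :: (Q' ++ i :: R) = (j :: Q') ++ i :: R from rfl, pw_append] at hPw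
      rw [show (j :: Q') ++ [i] = j :: (Q' ++ [i]) from rfl] at hPw
      linarith
  · have hiP : validPath i (i :: j :: T) := by
      refine ⟨List.nodup_cons.mpr ⟨hmem, hnd⟩, rfl, ?_⟩
      intro a ha
      rcases List.mem_cons.mp ha with h | h
      · exact h ▸ hi
      · exact h0 a h
    have h1 := pot_le w hiP
    rw [show pw w (i :: j :: T) = w i j + pw w (j :: T) from rfl] at h1
    linarith

theorem stmt_7 (n : ℕ) (hn : 4 ≤ n + 1) (d : Fin (n + 1) → Fin (n + 1) → ℝ)
    (hd : memDbar d) (x : Fin (n + 1) → Fin (n + 1) → ℝ) :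
    (memPAP x ∧ ∃ u : Fin (n + 1) → ℝ, ∀ i j : Fin (n + 1), i ≠ 0 → j ≠ 0 → i ≠ j →
        u i - u j + d i j ≤ 1 - x i j)
    ↔ (memPAP x ∧ ∀ (k : ℕ) (v : ℕ → Fin (n + 1)), IsCycle1 k v →
        cycleSum x k v ≤ (k : ℝ) - cycleSum d k v) := by
  constructor
  · rintro ⟨hx, u, hu⟩
    refine ⟨hx, ?_⟩
    rintro k v ⟨⟨hk2, hinj⟩, h0⟩
    have harc : ∀ i ∈ Finset.range k,
        u (v i) - u (v ((i + 1) % k)) + d (v i) (v ((i + 1) % k))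
          ≤ 1 - x (v i) (v ((i + 1) % k)) := by
      intro i hi
      simp only [Finset.mem_range] at hi
      have hs : (i + 1) % k < k := Nat.mod_lt _ (by omega)
      have hne : v i ≠ v ((i + 1) % k) := by
        intro h
        have h2 := hinj i hi _ hs h
        rcases Nat.lt_or_ge (i + 1) k with h' | h'
        · rw [Nat.mod_eq_of_lt h'] at h2; omega
        · have hik : i + 1 = k := by omega
          rw [hik, Nat.mod_self] at h2; omega
      exact hu _ _ (h0 i hi) (h0 _ hs) hne
    have key := Finset.sum_le_sum harc
    have e1 : ∑ i ∈ Finset.range k, (u (v i) - u (v ((i + 1) % k))) = 0 := by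
      rw [Finset.sum_sub_distrib, sum_shift (fun t => u (v t)) k (by omega), sub_self]
    rw [Finset.sum_add_distrib, e1, zero_add, Finset.sum_sub_distrib, Finset.sum_const,
      Finset.card_range, nsmul_eq_mul, mul_one] at key
    rw [cycleSum, cycleSum]
    linarith [key]
  · rintro ⟨hx, hC⟩
    refine ⟨hx, ?_⟩
    set w : Fin (n + 1) → Fin (n + 1) → ℝ := fun i j => 1 - x i j - d i j with hw
    have hcyc : ∀ c : List (Fin (n + 1)), c.Nodup → 2 ≤ c.length → (∀ a ∈ c, a ≠ 0) →
        0 ≤ pw w c + w (c.getD (c.length - 1) 0) (c.getD 0 0) := by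
      intro c hnd hlen h0
      have h1 := hC c.length (fun i => c.getD i 0) (isCycle1_of_list 0 c hnd hlen h0)
      have h2 := cycle_pw w 0 c hlen
      have h3 : cycleSum w c.length (fun i => c.getD i 0)
          = (c.length : ℝ) - cycleSum x c.length (fun i => c.getD i 0)
            - cycleSum d c.length (fun i => c.getD i 0) := by
        simp only [cycleSum, hw]
        rw [Finset.sum_sub_distrib, Finset.sum_sub_distrib, Finset.sum_const,
          Finset.card_range, nsmul_eq_mul, mul_one]
      rw [h3] at h2
      linarith
    refine ⟨pot w, ?_⟩
    intro i j hi hj hij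
    have h := pot_step w hcyc i j hi hj hij
    simp only [hw] at h
    linarith
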